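/- Let f = x₀²y₀ − (x₀+x₁)²y₁ + x₁²y₂ in the polynomial ring k[x₀,x₁,y₀,y₁,y₂] over a field k of characteristic 0, and let f_t = (1/3)(x₀+t·y₀)³ − (1/3)((x₀+x₁)+t·y₁)³ − (1/12)(2x₁−t·y₂)³ − (1/9)(x₀−x₁)³ + (1/9)(x₀+2x₁)³. Then f equals the limit as t → 0 of (1/t)·f_t; equivalently, (1/t)·f_t = f + t·g_t for some polynomial family g_t polynomial in t, i.e., f_t = t·f + t²·h(t) as polynomials in t. -/
import Mathlib


open MvPolynomial

/-- In `k[t][x₀,x₁,y₀,y₁,y₂]` (realized as multivariate polynomials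
over `Polynomial k`), the polynomial
`f_t = (1/3)(x₀+t·y₀)³ − (1/3)((x₀+x₁)+t·y₁)³ − (1/12)(2x₁−t·y₂)³ − (1/9)(x₀−x₁)³ + (1/9)(x₀+2x₁)³`
satisfies `f_t = t·f + t²·h` for some `h`, where
`f = x₀²y₀ − (x₀+x₁)²y₁ + x₁²y₂`; i.e. `f = lim_{t→0} (1/t) f_t`. -/
theorem stmt0 (k : Type*) [Field k] [CharZero k] :
    let R := MvPolynomial (Fin 5) (Polynomial k)
    let t : R := C Polynomial.X
    let c : k → R := fun a => C (Polynomial.C a)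
    let x0 : R := X 0
    let x1 : R := X 1
    let y0 : R := X 2
    let y1 : R := X 3
    let y2 : R := X 4
    let f : R := x0 ^ 2 * y0 - (x0 + x1) ^ 2 * y1 + x1 ^ 2 * y2
    let ft : R := c (1 / 3) * (x0 + t * y0) ^ 3 - c (1 / 3) * ((x0 + x1) + t * y1) ^ 3
      - c (1 / 12) * (2 * x1 - t * y2) ^ 3 - c (1 / 9) * (x0 - x1) ^ 3
      + c (1 / 9) * (x0 + 2 * x1) ^ 3
    ∃ h : R, ft = t * f + t ^ 2 * h := by
  intro R t c x0 x1 y0 y1 y2 f ft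
  have hmul : ∀ p q : k, c p * c q = c (p * q) := by
    intro p q; simp [c, ← map_mul]
  have hofnat : ∀ (n : ℕ) [n.AtLeastTwo], c (OfNat.ofNat n) = (OfNat.ofNat n : R) := by
    intro n _; rw [show c (OfNat.ofNat n) = C (Polynomial.C (OfNat.ofNat n)) from rfl, map_ofNat, map_ofNat]
  have e1 : c (1/36) * 36 = 1 := by
    rw [← hofnat 36, hmul]; norm_num [c]
  have h3 : c (1/3 : k) = c (1/36) * 12 := by
    rw [← hofnat 12, hmul]; norm_num
  have h12 : c (1/12 : k) = c (1/36) * 3 := by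
    rw [← hofnat 3, hmul]; norm_num
  have h9 : c (1/9 : k) = c (1/36) * 4 := by
    rw [← hofnat 4, hmul]; norm_num
  have h2 : c (1/2 : k) = c (1/36) * 18 := by
    rw [← hofnat 18, hmul]; norm_num
  refine ⟨x0 * y0 ^ 2 - (x0 + x1) * y1 ^ 2 - c (1/2) * (x1 * y2 ^ 2)
    + t * (c (1/3) * y0 ^ 3 - c (1/3) * y1 ^ 3 + c (1/12) * y2 ^ 3), ?_⟩
  show ft = _
  rw [show ft = c (1 / 3) * (x0 + t * y0) ^ 3 - c (1 / 3) * ((x0 + x1) + t * y1) ^ 3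
      - c (1 / 12) * (2 * x1 - t * y2) ^ 3 - c (1 / 9) * (x0 - x1) ^ 3
      + c (1 / 9) * (x0 + 2 * x1) ^ 3 from rfl,
    show f = x0 ^ 2 * y0 - (x0 + x1) ^ 2 * y1 + x1 ^ 2 * y2 from rfl, h3, h12, h9, h2]
  linear_combination (t * (x0 ^ 2 * y0 - (x0 + x1) ^ 2 * y1 + x1 ^ 2 * y2)
    + t ^ 2 * (x0 * y0 ^ 2 - (x0 + x1) * y1 ^ 2)) * e1
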